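/- Let μ be a sub-probability measure (total mass ≤ 1) on a measurable space and X a nonnegative μ-integrable random variable. Then exp(∫ X dμ) ≤ 1 + ∫ e^X dμ. -/

import Mathlib

open MeasureTheory Real

theorem stmt12 {α : Type*} [MeasurableSpace α] (μ : Measure α)
    (hμ : μ Set.univ ≤ 1)
    (X : α → ℝ) (hX0 : ∀ a, 0 ≤ X a) (hXi : Integrable X μ)
    (hXe : Integrable (fun a => Real.exp (X a)) μ) :
    Real.exp (∫ a, X a ∂μ) ≤ 1 + ∫ a, Real.exp (X a) ∂μ := by
  set I : ℝ := ∫ a, X a ∂μ with hI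
  set m : ℝ := (μ Set.univ).toReal with hm
  have hfin : μ Set.univ ≠ ⊤ := ne_top_of_le_ne_top (by simp) hμ
  haveI : IsFiniteMeasure μ := ⟨lt_of_le_of_lt hμ (by simp)⟩
  have hm1 : m ≤ 1 := by
    rw [hm]
    exact ENNReal.toReal_le_of_le_ofReal zero_le_one (by simpa using hμ)
  have hm0 : (0:ℝ) ≤ m := ENNReal.toReal_nonneg
  have hI0 : (0:ℝ) ≤ I := integral_nonneg hX0
  have hpt : ∀ a, Real.exp I * (1 + (X a - I)) ≤ Real.exp (X a) := by
    intro a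
    have h1 : (X a - I) + 1 ≤ Real.exp (X a - I) := Real.add_one_le_exp _
    have := mul_le_mul_of_nonneg_left h1 (Real.exp_pos I).le
    calc Real.exp I * (1 + (X a - I)) = Real.exp I * ((X a - I) + 1) := by ring
      _ ≤ Real.exp I * Real.exp (X a - I) := this
      _ = Real.exp (X a) := by rw [← Real.exp_add]; ring_nf
  have hint : Integrable (fun a => Real.exp I * (1 + (X a - I))) μ :=
    (((integrable_const (1:ℝ)).add (hXi.sub (integrable_const I))).const_mul _)
  have key : Real.exp I * (m + (I - I * m)) ≤ ∫ a, Real.exp (X a) ∂μ := by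
    have h2 : ∫ a, Real.exp I * (1 + (X a - I)) ∂μ ≤ ∫ a, Real.exp (X a) ∂μ :=
      integral_mono hint hXe hpt
    have h3 : ∫ a, Real.exp I * (1 + (X a - I)) ∂μ
        = Real.exp I * (m + (I - I * m)) := by
      rw [integral_const_mul]
      congr 1
      have e1 : ∫ a, (1 + (X a - I)) ∂μ
          = (∫ _a, (1:ℝ) ∂μ) + ∫ a, (X a - I) ∂μ :=
        integral_add (integrable_const _) (hXi.sub (integrable_const _))
      have e2 : ∫ a, (X a - I) ∂μ = (∫ a, X a ∂μ) - ∫ _a, I ∂μ :=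
        integral_sub hXi (integrable_const _)
      rw [e1, e2, integral_const, integral_const]
      simp only [smul_eq_mul, mul_one, measureReal_def, ← hI, ← hm]
      ring
    rwa [h3] at h2
  have htan : Real.exp I * (1 - I) ≤ 1 := by
    have h1 : 1 - I ≤ Real.exp (-I) := by
      have := Real.add_one_le_exp (-I); linarith
    calc Real.exp I * (1 - I) ≤ Real.exp I * Real.exp (-I) :=
          mul_le_mul_of_nonneg_left h1 (Real.exp_pos I).le
      _ = 1 := by rw [← Real.exp_add]; simp
  nlinarith [key, htan, hm0, hm1, (Real.exp_pos I).le, hI0]
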